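/- arXiv:2402.11945 — 4 statements merged into one kernel-verified Lean document; each statement's English description precedes it below -/
import Mathlib

section
/- Let 𝔽_q be a finite field of odd cardinality q and n ≥ 1. The number of symmetric matrices x ∈ M_n(𝔽_q) with rank(x) ≤ 1 is exactly q^n. -/
open Matrix

private lemma rank_vecMulVec_le' {F : Type*} [Field F] {n : ℕ}
    (u v : Fin n → F) : (vecMulVec u v).rank ≤ 1 := by
  rw [vecMulVec_eq (Fin 1)]
  calc (replicateCol (Fin 1) u * replicateRow (Fin 1) v).rank ≤ (replicateCol (Fin 1) u).rank :=
        rank_mul_le_left _ _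
    _ ≤ Fintype.card (Fin 1) := rank_le_card_width _
    _ = 1 := by simp

private lemma exists_vecMulVec_of_rank_le_one {F : Type*} [Field F] {n : ℕ}
    {x : Matrix (Fin n) (Fin n) F} (h : x.rank ≤ 1) :
    ∃ u v : Fin n → F, x = vecMulVec u v := by
  classical
  rw [Matrix.rank] at h
  obtain ⟨w, hw⟩ := finrank_le_one_iff.1 h
  have hcol : ∀ j : Fin n, ∃ c : F, c • (w : Fin n → F) = fun i => x i j := by
    intro j
    have hmem : (fun i => x i j) ∈ LinearMap.range x.mulVecLin := by
      refine ⟨Pi.single j 1, ?_⟩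
      simp [Matrix.mulVecLin_apply, Matrix.mulVec_single]; rfl
    obtain ⟨c, hc⟩ := hw ⟨_, hmem⟩
    exact ⟨c, by simpa using congrArg Subtype.val hc⟩
  choose c hc using hcol
  refine ⟨(w : Fin n → F), c, ?_⟩
  ext i j
  have := congrFun (hc j) i
  simp only [Pi.smul_apply, smul_eq_mul] at this
  rw [vecMulVec_apply, mul_comm, this]

theorem stmt_8 {F : Type*} [Field F] [Fintype F]
    (hodd : Odd (Fintype.card F)) (n : ℕ) (hn : 1 ≤ n) :
    Nat.card {x : Matrix (Fin n) (Fin n) F // xᵀ = x ∧ x.rank ≤ 1} =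
      Fintype.card F ^ n := by
  classical
  have hq : 2 ≤ Fintype.card F := Fintype.one_lt_card
  set q := Fintype.card F with hqdef
  rw [Nat.card_eq_fintype_card, Fintype.card_subtype]
  set S : Finset (Matrix (Fin n) (Fin n) F) :=
    Finset.univ.filter fun x => xᵀ = x ∧ x.rank ≤ 1 with hS
  set S' : Finset (Matrix (Fin n) (Fin n) F) := S.filter (· ≠ 0) with hS'
  set T : Finset (F × (Fin n → F)) :=
    Finset.univ.filter (fun p => p.1 ≠ 0 ∧ p.2 ≠ 0) with hT
  set f : F × (Fin n → F) → Matrix (Fin n) (Fin n) F :=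
    fun p => vecMulVec (p.1 • p.2) p.2 with hf
  have hfapp : ∀ p i j, f p i j = p.1 * p.2 i * p.2 j := by
    intro p i j; simp [hf, vecMulVec_apply, mul_assoc]
  -- the map lands in S'
  have hmaps : ∀ p ∈ T, f p ∈ S' := by
    intro p hp
    simp only [hT, Finset.mem_filter, Finset.mem_univ, true_and] at hp
    obtain ⟨ha, hu⟩ := hp
    obtain ⟨i0, hi0⟩ := Function.ne_iff.1 hu
    simp only [Pi.zero_apply] at hi0
    simp only [hS', hS, Finset.mem_filter, Finset.mem_univ, true_and]
    refine ⟨⟨?_, rank_vecMulVec_le' _ _⟩, ?_⟩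
    · ext i j
      simp only [transpose_apply, hfapp]
      ring
    · intro h0
      have := congrFun (congrFun h0 i0) i0
      rw [hfapp] at this
      simp only [Matrix.zero_apply] at this
      exact (mul_ne_zero (mul_ne_zero ha hi0) hi0) this
  -- each fiber has cardinality q - 1
  have hfiber : ∀ b ∈ S', (T.filter fun p => f p = b).card = q - 1 := by
    intro b hb
    simp only [hS', hS, Finset.mem_filter, Finset.mem_univ, true_and] at hb
    obtain ⟨⟨hsymm, hrank⟩, hb0⟩ := hb
    obtain ⟨u, v, huv⟩ := exists_vecMulVec_of_rank_le_one hrank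
    -- find an index where u is nonzero
    have hbne : ∃ i0 j0, u i0 * v j0 ≠ 0 := by
      by_contra hc
      push_neg at hc
      exact hb0 (by ext i j; rw [huv, vecMulVec_apply, hc]; rfl)
    obtain ⟨i0, j0, hij⟩ := hbne
    have hu0 : u i0 ≠ 0 := fun h => hij (by rw [h, zero_mul])
    have hv0 : v j0 ≠ 0 := fun h => hij (by rw [h, mul_zero])
    -- b = f (a, u) with a = v i0 / u i0
    set a : F := v i0 * (u i0)⁻¹ with hadef
    have hvj : ∀ j, v j = a * u j := by
      intro j
      have hsy : u i0 * v j = u j * v i0 := by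
        have h1 := congrFun (congrFun hsymm j) i0
        have h2 : b i0 j = u i0 * v j := by rw [huv]; rfl
        have h3 : b j i0 = u j * v i0 := by rw [huv]; rfl
        rw [transpose_apply, h2, h3] at h1
        exact h1
      have hvu : v i0 * u j = v j * u i0 := by linear_combination -hsy
      have h4 : v j = v i0 * u j * (u i0)⁻¹ := by
        rw [hvu]; exact (mul_inv_cancel_right₀ hu0 _).symm
      rw [h4, hadef]; ring
    have ha0 : a ≠ 0 := by
      intro h
      apply hv0
      rw [hvj j0, h, zero_mul]
    have hbeq : ∀ i j, b i j = a * u i * u j := by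
      intro i j
      rw [huv, vecMulVec_apply, hvj j]
      ring
    -- the fiber is the image of F× under t ↦ (a/t², t•u)
    have himg : (T.filter fun p => f p = b)
        = (Finset.univ.filter (· ≠ (0 : F))).image
            (fun t => (a * (t * t)⁻¹, t • u)) := by
      ext p
      simp only [Finset.mem_filter, Finset.mem_image, Finset.mem_univ, true_and, hT]
      constructor
      · rintro ⟨⟨hp1, hp2⟩, hpb⟩
        have hpe : ∀ i j, p.1 * p.2 i * p.2 j = a * u i * u j := by
          intro i j
          rw [← hfapp, hpb, hbeq]
        have hp20 : p.2 i0 ≠ 0 := by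
          intro h
          have h2 := hpe i0 i0
          rw [h, mul_zero] at h2
          exact (mul_ne_zero (mul_ne_zero ha0 hu0) hu0) h2.symm
        set t : F := p.2 i0 * (u i0)⁻¹ with htdef
        have ht0 : t ≠ 0 := by
          simp only [htdef]
          exact mul_ne_zero hp20 (inv_ne_zero hu0)
        refine ⟨t, ht0, ?_⟩
        have hp2j : ∀ j, p.2 j = t * u j := by
          intro j
          have h1 := hpe i0 j
          have h2 := hpe i0 i0
          have hkey : p.2 j * u i0 * (p.1 * p.2 i0) = p.2 i0 * u j * (p.1 * p.2 i0) := by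
            linear_combination u i0 * h1 - u j * h2
          have hpu : p.2 j * u i0 = p.2 i0 * u j :=
            mul_right_cancel₀ (mul_ne_zero hp1 hp20) hkey
          have h4 : p.2 j = p.2 i0 * u j * (u i0)⁻¹ := by
            rw [← hpu]; exact (mul_inv_cancel_right₀ hu0 _).symm
          rw [h4, htdef]; ring
        have hp1a : p.1 = a * (t * t)⁻¹ := by
          have h2 := hpe i0 i0
          rw [hp2j i0] at h2
          have hptt : p.1 * (t * t) = a :=
            mul_right_cancel₀ (mul_ne_zero hu0 hu0) (by linear_combination h2)
          exact (eq_mul_inv_iff_mul_eq₀ (mul_ne_zero ht0 ht0)).2 hptt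
        rw [Prod.ext_iff]
        exact ⟨hp1a.symm, funext fun j => (hp2j j).symm⟩
      · rintro ⟨t, ht0, rfl⟩
        have htt : (t * t) ≠ 0 := mul_ne_zero ht0 ht0
        refine ⟨⟨mul_ne_zero ha0 (inv_ne_zero htt), ?_⟩, ?_⟩
        · intro h
          apply hu0
          have := congrFun h i0
          simp only [Pi.smul_apply, smul_eq_mul, Pi.zero_apply] at this
          exact (mul_eq_zero.1 this).resolve_left ht0
        · ext i j
          rw [hfapp, hbeq]
          simp only [Pi.smul_apply, smul_eq_mul]
          field_simp
    rw [himg, Finset.card_image_of_injOn, Finset.filter_ne', Finset.card_erase_of_mem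
      (Finset.mem_univ _), Finset.card_univ, hqdef]
    intro s hs t ht hst
    simp only [Prod.mk.injEq] at hst
    have := congrFun hst.2 i0
    simp only [Pi.smul_apply, smul_eq_mul] at this
    exact mul_right_cancel₀ hu0 this
  -- count T
  have hTcard : T.card = (q - 1) * (q ^ n - 1) := by
    have : T = (Finset.univ.filter (· ≠ (0 : F))) ×ˢ
        (Finset.univ.filter (· ≠ (0 : Fin n → F))) := by
      ext p
      simp [hT, Finset.mem_product]
    rw [this, Finset.card_product, Finset.filter_ne', Finset.filter_ne',
      Finset.card_erase_of_mem (Finset.mem_univ _),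
      Finset.card_erase_of_mem (Finset.mem_univ _), Finset.card_univ, Finset.card_univ]
    congr 1
    rw [Fintype.card_fun, Fintype.card_fin]
  -- fiberwise count
  have hsum : T.card = S'.card * (q - 1) := by
    rw [Finset.card_eq_sum_card_fiberwise hmaps]
    rw [Finset.sum_congr rfl hfiber, Finset.sum_const, smul_eq_mul]
  have hq1 : 0 < q - 1 := by omega
  have hS'card : S'.card = q ^ n - 1 := by
    have : S'.card * (q - 1) = (q ^ n - 1) * (q - 1) := by
      rw [← hsum, hTcard]; ring
    exact Nat.eq_of_mul_eq_mul_right hq1 this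
  -- add back zero
  have h0mem : (0 : Matrix (Fin n) (Fin n) F) ∈ S := by
    simp only [hS, Finset.mem_filter, Finset.mem_univ, true_and]
    exact ⟨by simp, by rw [Matrix.rank_zero]; omega⟩
  have hsplit : S.card = S'.card + 1 := by
    have := Finset.card_filter_add_card_filter_not
      (s := S) (p := fun x => x ≠ 0)
    rw [hS'] at *
    have heq : (S.filter fun x => ¬ x ≠ 0) = {0} := by
      ext x
      simp only [Finset.mem_filter, not_not, Finset.mem_singleton]
      constructor
      · rintro ⟨_, h⟩; exact h
      · rintro rfl; exact ⟨h0mem, rfl⟩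
    rw [heq, Finset.card_singleton] at this
    omega
  rw [hsplit, hS'card]
  have : 1 ≤ q ^ n := Nat.one_le_pow _ _ (by omega)
  omega
end

section
/- Let X be a locally compact Hausdorff space and μ a positive Radon measure on X. Let ψ : X → ℝ be a nonnegative, bounded, compactly supported function that is continuous μ-almost everywhere. Suppose n is a natural number with ‖ψ‖_∞ ≤ n and ε > 0 satisfies ∫ ψ dμ ≤ ε. Then there exists a continuous compactly supported function h : X → ℝ such that ψ(x) ≤ h(x) ≤ 4n for μ-almost every x ∈ X, and ∫ h dμ ≤ 4·n·ε. -/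
open MeasureTheory Set Filter Topology
open scoped ENNReal

lemma aux_summable (c : ℝ) : Summable (fun k : ℕ => c * (1/3 : ℝ) ^ (k + 1)) := by
  have hgeom : Summable (fun k : ℕ => (1/3 : ℝ) ^ k) :=
    summable_geometric_of_lt_one (by norm_num) (by norm_num)
  simpa [pow_succ, mul_comm, mul_assoc, mul_left_comm] using (hgeom.mul_left (c * (1/3 : ℝ)))

lemma aux_summable_if (c : ℝ) (hc : 0 ≤ c) (k0 : ℕ) :
    Summable (fun k : ℕ => if k0 ≤ k then c * (1/3 : ℝ) ^ (k + 1) else 0) := by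
  apply Summable.of_nonneg_of_le (fun k => ?_) (fun k => ?_) (aux_summable c)
  · split <;> positivity
  · split
    · exact le_rfl
    · positivity

lemma aux_tail (c : ℝ) (hc : 0 ≤ c) (k0 : ℕ) :
    (∑' k : ℕ, if k0 ≤ k then c * (1/3 : ℝ) ^ (k + 1) else 0)
      = (3/2) * (c * (1/3 : ℝ) ^ (k0 + 1)) := by
  have hf := aux_summable_if c hc k0
  have key := Summable.sum_add_tsum_nat_add (f := fun k => if k0 ≤ k then c * (1/3:ℝ)^(k+1) else 0) k0 hf
  have h1 : (∑ i ∈ Finset.range k0, (if k0 ≤ i then c * (1/3:ℝ)^(i+1) else 0)) = 0 := by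
    apply Finset.sum_eq_zero; intro i hi
    rw [if_neg]; exact Nat.not_le.mpr (Finset.mem_range.mp hi)
  have h2 : (∑' i : ℕ, (if k0 ≤ i + k0 then c * (1/3:ℝ)^(i + k0 + 1) else 0))
      = (3/2) * (c * (1/3:ℝ)^(k0+1)) := by
    have he : ∀ i : ℕ, (if k0 ≤ i + k0 then c * (1/3:ℝ)^(i + k0 + 1) else 0)
        = (c * (1/3:ℝ)^(k0+1)) * (1/3:ℝ)^i := by
      intro i; rw [if_pos (Nat.le_add_left _ _)]; ring
    rw [tsum_congr he, tsum_mul_left, tsum_geometric_of_lt_one (by norm_num) (by norm_num)]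
    norm_num
    ring
  rw [h1, h2] at key
  linarith [key]

theorem stmt_13 {X : Type*} [TopologicalSpace X] [LocallyCompactSpace X] [T2Space X]
    [MeasurableSpace X] [BorelSpace X]
    (μ : Measure X) [μ.Regular]
    (ψ : X → ℝ) (hpos : ∀ x, 0 ≤ ψ x) (hsupp : HasCompactSupport ψ)
    (hae : μ {x | ¬ ContinuousAt ψ x} = 0) (hint : Integrable ψ μ)
    (n : ℕ) (hbd : ∀ x, ψ x ≤ n)
    (ε : ℝ) (hε : 0 < ε) (hψε : (∫ x, ψ x ∂μ) ≤ ε) :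
    ∃ h : X → ℝ, Continuous h ∧ HasCompactSupport h ∧
      (∀ᵐ x ∂μ, ψ x ≤ h x ∧ h x ≤ 4 * n) ∧ (∫ x, h x ∂μ) ≤ 4 * n * ε := by
  rcases Nat.eq_zero_or_pos n with hn0 | hn
  · subst hn0
    have hψ0 : ∀ x, ψ x = 0 := fun x =>
      le_antisymm (by simpa using hbd x) (hpos x)
    refine ⟨0, continuous_const, HasCompactSupport.intro isCompact_empty (by simp), ?_, by simp⟩
    filter_upwards with x
    simp [hψ0 x]
  have hn1 : (1 : ℝ) ≤ n := by exact_mod_cast hn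
  -- levels and weights
  set r : ℝ := 1/3 with hr
  set t : ℕ → ℝ := fun k => (n : ℝ) * r ^ (k + 1) with ht
  set a : ℕ → ℝ := fun k => (2 * n : ℝ) * r ^ (k + 1) with ha
  have htpos : ∀ k, 0 < t k := fun k => by positivity
  have hapos : ∀ k, 0 < a k := fun k => by positivity
  have hta : ∀ k, a k = 2 * t k := fun k => by show (2*(n:ℝ)) * r ^ (k+1) = 2 * ((n:ℝ) * r^(k+1)); ring
  have htail : ∀ k0, (∑' k : ℕ, if k0 ≤ k then a k else 0) = 3 * t k0 := by
    intro k0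
    have := aux_tail (2 * n) (by positivity) k0
    simp only [ht, ha, hr] at this ⊢
    rw [this]; ring
  have htmono : ∀ ⦃j k : ℕ⦄, j ≤ k → t k ≤ t j := by
    intro j k hjk
    apply mul_le_mul_of_nonneg_left _ (by positivity)
    apply pow_le_pow_of_le_one (by norm_num) (by norm_num) (by omega)
  have hexists : ∀ c : ℝ, 0 < c → ∃ k, t k ≤ c := by
    intro c hc
    obtain ⟨k, hk⟩ := exists_pow_lt_of_lt_one
      (div_pos hc (by positivity : (0:ℝ) < (n:ℝ))) (by norm_num : (1/3 : ℝ) < 1)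
    refine ⟨k, ?_⟩
    have hn0 : (0:ℝ) < (n:ℝ) := by positivity
    have hlt : (n:ℝ) * (1/3:ℝ) ^ k < c := by
      calc (n:ℝ) * (1/3:ℝ) ^ k < (n:ℝ) * (c / n) := mul_lt_mul_of_pos_left hk hn0
        _ = c := by field_simp
    have hmono : (n:ℝ) * (1/3:ℝ) ^ (k+1) ≤ (n:ℝ) * (1/3:ℝ) ^ k :=
      mul_le_mul_of_nonneg_left
        (pow_le_pow_of_le_one (by norm_num) (by norm_num) (by omega)) (by positivity)
    show (n:ℝ) * (1/3:ℝ) ^ (k+1) ≤ c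
    linarith
  -- measurable version of ψ
  set ψ' : X → ℝ := hint.1.mk ψ with hψ'
  have hψ'meas : Measurable ψ' := hint.1.stronglyMeasurable_mk.measurable
  have hψψ' : ψ =ᵐ[μ] ψ' := hint.1.ae_eq_mk
  -- the compact level sets
  set C : ℕ → Set X := fun k => closure {x | t k ≤ ψ x} with hC
  have hCK : ∀ k, C k ⊆ tsupport ψ := by
    intro k
    apply closure_mono
    intro x hx
    have hxne : ψ x ≠ 0 := by
      intro h0
      simp only [mem_setOf_eq, h0] at hx
      exact absurd hx (not_le.mpr (htpos k))
    exact hxne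
  have hCcomp : ∀ k, IsCompact (C k) :=
    fun k => hsupp.of_isClosed_subset isClosed_closure (hCK k)
  -- continuity: closure points outside discontinuity set satisfy the inequality
  have hCsub : ∀ k x, x ∈ C k → ContinuousAt ψ x → t k ≤ ψ x := by
    intro k x hx hcont
    haveI hne : (𝓝[{y | t k ≤ ψ y}] x).NeBot := mem_closure_iff_nhdsWithin_neBot.mp hx
    exact ge_of_tendsto (hcont.continuousWithinAt (s := {y | t k ≤ ψ y}))
      (eventually_nhdsWithin_of_forall (fun y hy => hy))
  -- measure bound via measurable version
  set m : ℕ → ℝ≥0∞ := fun k => μ {x | t k ≤ ψ' x} with hm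
  have hCm : ∀ k, μ (C k) ≤ m k := by
    intro k
    have hnull : μ ({x | ¬ ContinuousAt ψ x} ∪ {x | ψ x ≠ ψ' x}) = 0 :=
      measure_union_null hae (ae_iff.mp hψψ')
    have hsub : C k ⊆ {x | t k ≤ ψ' x} ∪ ({x | ¬ ContinuousAt ψ x} ∪ {x | ψ x ≠ ψ' x}) := by
      intro x hx
      by_cases hcont : ContinuousAt ψ x
      · by_cases heq : ψ x = ψ' x
        · exact Or.inl (by simp only [mem_setOf_eq, ← heq]; exact hCsub k x hx hcont)
        · exact Or.inr (Or.inr heq)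
      · exact Or.inr (Or.inl hcont)
    calc μ (C k) ≤ μ ({x | t k ≤ ψ' x} ∪ _) := measure_mono hsub
      _ ≤ μ {x | t k ≤ ψ' x} + μ _ := measure_union_le _ _
      _ = m k := by rw [hnull, add_zero]
  have hkey : (∑' k, ENNReal.ofReal (a k) * m k) ≤ ENNReal.ofReal (3 * ε) := by
    have hEmeas : ∀ k : ℕ, MeasurableSet {x | t k ≤ ψ' x} :=
      fun k => measurableSet_le measurable_const hψ'meas
    have h1 : ∀ k : ℕ, ENNReal.ofReal (a k) * m k
        = ∫⁻ x, ({x | t k ≤ ψ' x}).indicator (fun _ => ENNReal.ofReal (a k)) x ∂μ := by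
      intro k
      rw [lintegral_indicator_const (hEmeas k)]
    have h2 : (∑' k, ENNReal.ofReal (a k) * m k)
        = ∫⁻ x, (∑' k, ({y | t k ≤ ψ' y}).indicator (fun _ => ENNReal.ofReal (a k)) x) ∂μ := by
      rw [tsum_congr h1]
      exact (lintegral_tsum (fun k =>
        ((measurable_const.indicator (hEmeas k)).aemeasurable))).symm
    rw [h2]
    have hpt : ∀ x, (∑' k, ({y | t k ≤ ψ' y}).indicator (fun _ => ENNReal.ofReal (a k)) x)
        ≤ ENNReal.ofReal (3 * ψ' x) := by
      intro x
      by_cases hx : 0 < ψ' x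
      · have hex : ∃ k, t k ≤ ψ' x := hexists (ψ' x) hx
        set k0 := Nat.find hex with hk0def
        have hk0 : t k0 ≤ ψ' x := Nat.find_spec hex
        have heq : ∀ k, ({y | t k ≤ ψ' y}).indicator (fun _ => ENNReal.ofReal (a k)) x
            = ENNReal.ofReal (if k0 ≤ k then a k else 0) := by
          intro k
          by_cases hk : k0 ≤ k
          · rw [indicator_of_mem (by exact le_trans (htmono hk) hk0), if_pos hk]
          · rw [indicator_of_notMem, if_neg hk, ENNReal.ofReal_zero]
            exact Nat.find_min hex (by omega)
        rw [tsum_congr heq,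
          ← ENNReal.ofReal_tsum_of_nonneg (fun k => by split <;> positivity)
            (aux_summable_if (2*n) (by positivity) k0), htail k0]
        exact ENNReal.ofReal_le_ofReal (by linarith)
      · have heq : ∀ k, ({y | t k ≤ ψ' y}).indicator (fun _ => ENNReal.ofReal (a k)) x
            = 0 := by
          intro k
          apply indicator_of_notMem
          simp only [mem_setOf_eq, not_le]
          calc ψ' x ≤ 0 := not_lt.mp hx
            _ < t k := htpos k
        rw [tsum_congr heq]
        simp
    calc (∫⁻ x, (∑' k, ({y | t k ≤ ψ' y}).indicator (fun _ => ENNReal.ofReal (a k)) x) ∂μ)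
        ≤ ∫⁻ x, ENNReal.ofReal (3 * ψ' x) ∂μ := lintegral_mono hpt
      _ = ∫⁻ x, ENNReal.ofReal (3 * ψ x) ∂μ :=
          lintegral_congr_ae (hψψ'.mono fun x hx => by dsimp only; rw [hx])
      _ = ENNReal.ofReal (∫ x, 3 * ψ x ∂μ) :=
          (ofReal_integral_eq_lintegral_ofReal (hint.const_mul 3)
            (ae_of_all _ fun x => by have := hpos x; positivity)).symm
      _ ≤ ENNReal.ofReal (3 * ε) := by
          apply ENNReal.ofReal_le_ofReal
          rw [integral_const_mul]
          linarith
  -- choose the ambient compact neighborhood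
  obtain ⟨K', hK'comp, hKK'⟩ := exists_compact_superset hsupp
  -- choose open sets
  have hU : ∀ k : ℕ, ∃ U : Set X, C k ⊆ U ∧ IsOpen U ∧ U ⊆ interior K' ∧
      μ U ≤ m k + ENNReal.ofReal (ε * (1/2) ^ (k + 1) / a k) := by
    intro k
    have hCfin : μ (C k) ≠ ⊤ := ((hCcomp k).measure_lt_top).ne
    have hηpos : ENNReal.ofReal (ε * (1/2) ^ (k + 1) / a k) ≠ 0 := by
      rw [ne_eq, ENNReal.ofReal_eq_zero, not_le]
      have := hapos k
      positivity
    obtain ⟨U', hU'sub, hU'open, hU'lt⟩ := (C k).exists_isOpen_lt_add hCfin hηpos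
    refine ⟨U' ∩ interior K', subset_inter hU'sub ((hCK k).trans hKK'),
      hU'open.inter isOpen_interior, inter_subset_right, ?_⟩
    calc μ (U' ∩ interior K') ≤ μ U' := measure_mono inter_subset_left
      _ ≤ μ (C k) + ENNReal.ofReal (ε * (1/2) ^ (k + 1) / a k) := hU'lt.le
      _ ≤ m k + ENNReal.ofReal (ε * (1/2) ^ (k + 1) / a k) := add_le_add_left (hCm k) _
  choose U hCU hUopen hUK' hUm using hU
  -- Urysohn functions
  have hf : ∀ k : ℕ, ∃ f : C(X, ℝ), EqOn f 1 (C k) ∧ EqOn f 0 (U k)ᶜ ∧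
      HasCompactSupport f ∧ ∀ x, f x ∈ Icc (0:ℝ) 1 := by
    intro k
    exact exists_continuous_one_zero_of_isCompact (hCcomp k) (hUopen k).isClosed_compl
      (disjoint_compl_right_iff_subset.mpr (hCU k))
  choose f hf1 hf0 hfsupp hf01 using hf
  -- the function h
  set h : X → ℝ := fun x => ∑' k, a k * f k x with hh
  have hbound : ∀ k x, ‖a k * f k x‖ ≤ a k := by
    intro k x
    rw [Real.norm_eq_abs, abs_mul, abs_of_pos (hapos k)]
    have := hf01 k x
    calc a k * |f k x| ≤ a k * 1 := by
          apply mul_le_mul_of_nonneg_left _ (hapos k).le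
          rw [abs_le]; exact ⟨by linarith [this.1], this.2⟩
      _ = a k := mul_one _
  have hsummable : Summable a := aux_summable (2 * n)
  have hcont : Continuous h :=
    continuous_tsum (fun k => continuous_const.mul (f k).continuous) hsummable hbound
  have hsx : ∀ x, Summable (fun k => a k * f k x) := by
    intro x
    apply Summable.of_norm
    exact Summable.of_nonneg_of_le (fun k => norm_nonneg _) (fun k => hbound k x) hsummable
  have hhsupp : HasCompactSupport h := by
    apply HasCompactSupport.intro hK'comp
    intro x hx
    have : ∀ k, f k x = 0 := by
      intro k
      apply hf0 k
      intro hxU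
      exact hx (interior_subset (hUK' k hxU))
    simp [hh, this]
  have hdom : ∀ x, ψ x ≤ h x := by
    intro x
    rcases eq_or_lt_of_le (hpos x) with h0 | h0
    · rw [← h0]
      exact tsum_nonneg fun k => mul_nonneg (hapos k).le (hf01 k x).1
    · have hex : ∃ k, t k ≤ ψ x := hexists (ψ x) h0
      set k0 := Nat.find hex with hk0def
      have hk0 : t k0 ≤ ψ x := Nat.find_spec hex
      have hupper : ψ x ≤ 3 * t k0 := by
        rcases Nat.eq_zero_or_pos k0 with h | h
        · rw [h]
          have h30 : 3 * t 0 = (n:ℝ) := by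
            show 3 * ((n:ℝ) * (1/3:ℝ) ^ (0+1)) = (n:ℝ)
            ring
          linarith [hbd x]
        · have hmin : ¬ t (k0 - 1) ≤ ψ x := Nat.find_min hex (by omega)
          have hlt : ψ x < t (k0 - 1) := not_le.mp hmin
          have heq3 : t (k0 - 1) = 3 * t k0 := by
            show (n:ℝ) * (1/3:ℝ) ^ (k0-1+1) = 3 * ((n:ℝ) * (1/3:ℝ) ^ (k0+1))
            have hk1 : k0 - 1 + 1 = k0 := by omega
            rw [hk1, pow_succ]
            ring
          linarith
      have hge : (∑' k, if k0 ≤ k then a k else 0) ≤ h x := by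
        apply Summable.tsum_le_tsum _ (aux_summable_if (2*n) (by positivity) k0) (hsx x)
        intro k
        by_cases hk : k0 ≤ k
        · rw [if_pos hk]
          have hfx : f k x = 1 := hf1 k (subset_closure (le_trans (htmono hk) hk0))
          rw [hfx, mul_one]
        · rw [if_neg hk]
          exact mul_nonneg (hapos k).le (hf01 k x).1
      rw [htail k0] at hge
      linarith
  -- pointwise upper bound
  have hub : ∀ x, h x ≤ (n : ℝ) := by
    intro x
    have : h x ≤ ∑' k, (if 0 ≤ k then a k else 0) := by
      apply Summable.tsum_le_tsum _ (hsx x) (aux_summable_if (2*n) (by positivity) 0)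
      intro k
      simp only [Nat.zero_le, if_true]
      calc a k * f k x ≤ a k * 1 := by
            exact mul_le_mul_of_nonneg_left (hf01 k x).2 (hapos k).le
        _ = a k := mul_one _
    rw [htail 0] at this
    calc h x ≤ 3 * t 0 := this
      _ = (n : ℝ) := by simp [ht, hr]; ring
  have hsum2 : Summable (fun k : ℕ => ε * (1/2 : ℝ) ^ (k + 1)) := by
    have := (summable_geometric_of_lt_one (by norm_num : (0:ℝ) ≤ 1/2)
      (by norm_num : (1/2:ℝ) < 1)).mul_left (ε * (1/2))
    simpa [pow_succ, mul_comm, mul_assoc, mul_left_comm] using this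
  have htsum2 : (∑' k : ℕ, ε * (1/2 : ℝ) ^ (k + 1)) = ε := by
    have he : ∀ k : ℕ, ε * (1/2 : ℝ) ^ (k + 1) = (ε * (1/2)) * (1/2 : ℝ) ^ k :=
      fun k => by ring
    rw [tsum_congr he, tsum_mul_left,
      tsum_geometric_of_lt_one (by norm_num) (by norm_num)]
    norm_num
    ring
  have hintle : (∫ x, h x ∂μ) ≤ 4 * n * ε := by
    have hint_h : Integrable h μ := hcont.integrable_of_hasCompactSupport hhsupp
    have hnn : 0 ≤ᵐ[μ] h := ae_of_all _ fun x =>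
      tsum_nonneg fun k => mul_nonneg (hapos k).le (hf01 k x).1
    rw [integral_eq_lintegral_of_nonneg_ae hnn hint_h.1]
    have hlin : (∫⁻ x, ENNReal.ofReal (h x) ∂μ) ≤ ENNReal.ofReal (4 * n * ε) := by
      have hstep1 : ∀ x, ENNReal.ofReal (h x) = ∑' k, ENNReal.ofReal (a k * f k x) :=
        fun x => ENNReal.ofReal_tsum_of_nonneg
          (fun k => mul_nonneg (hapos k).le (hf01 k x).1) (hsx x)
      calc (∫⁻ x, ENNReal.ofReal (h x) ∂μ)
          = ∑' k, ∫⁻ x, ENNReal.ofReal (a k * f k x) ∂μ := by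
            simp_rw [hstep1]
            exact lintegral_tsum fun k => (ENNReal.measurable_ofReal.comp
              (continuous_const.mul (f k).continuous).measurable).aemeasurable
        _ ≤ ∑' k, ENNReal.ofReal (a k) * μ (U k) := by
            apply ENNReal.tsum_le_tsum
            intro k
            have hb : ∀ x, ENNReal.ofReal (a k * f k x)
                ≤ (U k).indicator (fun _ => ENNReal.ofReal (a k)) x := by
              intro x
              by_cases hx : x ∈ U k
              · rw [indicator_of_mem hx]
                apply ENNReal.ofReal_le_ofReal
                calc a k * f k x ≤ a k * 1 :=
                      mul_le_mul_of_nonneg_left (hf01 k x).2 (hapos k).le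
                  _ = a k := mul_one _
              · rw [indicator_of_notMem hx, hf0 k hx, Pi.zero_apply, mul_zero, ENNReal.ofReal_zero]
            calc (∫⁻ x, ENNReal.ofReal (a k * f k x) ∂μ)
                ≤ ∫⁻ x, (U k).indicator (fun _ => ENNReal.ofReal (a k)) x ∂μ :=
                  lintegral_mono hb
              _ = ENNReal.ofReal (a k) * μ (U k) :=
                  lintegral_indicator_const (hUopen k).measurableSet _
        _ ≤ ∑' k, (ENNReal.ofReal (a k) * m k + ENNReal.ofReal (ε * (1/2) ^ (k + 1))) := by
            apply ENNReal.tsum_le_tsum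
            intro k
            calc ENNReal.ofReal (a k) * μ (U k)
                ≤ ENNReal.ofReal (a k) * (m k + ENNReal.ofReal (ε * (1/2) ^ (k+1) / a k)) :=
                  mul_le_mul_right (hUm k) _
              _ = ENNReal.ofReal (a k) * m k
                  + ENNReal.ofReal (a k) * ENNReal.ofReal (ε * (1/2) ^ (k+1) / a k) :=
                  mul_add _ _ _
              _ = ENNReal.ofReal (a k) * m k + ENNReal.ofReal (ε * (1/2) ^ (k + 1)) := by
                  rw [← ENNReal.ofReal_mul (hapos k).le]
                  congr 1
                  field_simp [(hapos k).ne']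
        _ = (∑' k, ENNReal.ofReal (a k) * m k)
            + ∑' k, ENNReal.ofReal (ε * (1/2) ^ (k + 1)) := ENNReal.tsum_add
        _ ≤ ENNReal.ofReal (3 * ε) + ENNReal.ofReal ε := by
            apply add_le_add hkey
            rw [← ENNReal.ofReal_tsum_of_nonneg (fun k => by positivity) hsum2, htsum2]
        _ ≤ ENNReal.ofReal (4 * n * ε) := by
            rw [← ENNReal.ofReal_add (by positivity) hε.le]
            apply ENNReal.ofReal_le_ofReal
            nlinarith
    exact ENNReal.toReal_le_of_le_ofReal (by positivity) hlin
  refine ⟨h, hcont, hhsupp, ?_, hintle⟩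
  filter_upwards with x
  refine ⟨hdom x, (hub x).trans ?_⟩
  nlinarith [hn1]
end

section
/- Let K be a finite group, N ⊴ K a normal subgroup, θ : K → K a group automorphism with θ(N) = N, and δ ∈ K. Let U = {k·δ·θ(k)⁻¹ : k ∈ K} and M = #{k ∈ K : k·δ·θ(k)⁻¹ ∈ δN}. Then for every g ∈ K: (1/|K|) · #{k ∈ K : k⁻¹·g·θ(k) ∈ δN} equals M/|K| if g ∈ U·N (equivalently g ∈ N·U), and equals 0 otherwise. -/
open scoped Classical in
theorem stmt_17 {K : Type*} [Group K] [Fintype K]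
    (N : Subgroup K) (hN : N.Normal) (θ : K ≃* K)
    (hθ : ∀ x : K, x ∈ N ↔ θ x ∈ N) (δ : K) (g : K) :
    (Nat.card {k : K // δ⁻¹ * (k⁻¹ * g * θ k) ∈ N} : ℚ) / (Fintype.card K : ℚ) =
      if ∃ k : K, ∃ m ∈ N, g = k * δ * (θ k)⁻¹ * m then
        (Nat.card {k : K // δ⁻¹ * (k * δ * (θ k)⁻¹) ∈ N} : ℚ) / (Fintype.card K : ℚ)
      else 0 := by
  split_ifs with h
  · obtain ⟨k₀, m, hm, hg⟩ := h
    congr 2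
    apply Nat.card_congr
    refine Equiv.subtypeEquiv ((Equiv.inv K).trans (Equiv.mulRight k₀)) (fun k => ?_)
    simp only [Equiv.trans_apply, Equiv.inv_apply, Equiv.coe_mulRight]
    have key : δ⁻¹ * (k⁻¹ * g * θ k) =
        δ⁻¹ * ((k⁻¹ * k₀) * δ * (θ (k⁻¹ * k₀))⁻¹) * ((θ k)⁻¹ * m * θ k) := by
      subst hg
      simp only [map_mul, map_inv]
      group
    rw [show (δ⁻¹ * (k⁻¹ * g * θ k) ∈ N) ↔
        (δ⁻¹ * ((k⁻¹ * k₀) * δ * (θ (k⁻¹ * k₀))⁻¹) * ((θ k)⁻¹ * m * θ k) ∈ N) from by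
      rw [key]]
    have hmem : (θ k)⁻¹ * m * θ k ∈ N := by
      have := hN.conj_mem m hm (θ k)⁻¹
      simpa using this
    exact mul_mem_cancel_right hmem
  · have : IsEmpty {k : K // δ⁻¹ * (k⁻¹ * g * θ k) ∈ N} := by
      constructor
      rintro ⟨k, hk⟩
      apply h
      refine ⟨k, θ k * (δ⁻¹ * (k⁻¹ * g * θ k)) * (θ k)⁻¹, ?_, ?_⟩
      · exact hN.conj_mem _ hk (θ k)
      · group
    simp [Nat.card_of_isEmpty]
end

section
/- Let K be a field of characteristic 0, n ≥ 2, and J ∈ GL_n(K) with ᵗJ = (-1)^{n-1}·J. Define θ(g) = J·ᵗg⁻¹·J⁻¹. Let g ∈ GL_n(K) satisfy (g·θ(g))² = 1_n. Then there exist y ∈ GL_n(K), natural numbers p, q with p + q = n and q even, an invertible symmetric matrix B ∈ GL_p(K), and an invertible alternating matrix C ∈ GL_q(K), such that y⁻¹·g·θ(y) · J equals the block-diagonal matrix diag(B, C). -/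
open Matrix

theorem keyMN {n : ℕ} {K : Type*} [Field K]
    (J : Matrix (Fin n) (Fin n) K) (hJ : IsUnit J.det) {ε : K} (hε2 : ε * ε = 1)
    (hJt : Jᵀ = ε • J)
    (g : Matrix (Fin n) (Fin n) K) (hg : IsUnit g.det)
    (hinv : (g * (J * (g⁻¹)ᵀ * J⁻¹)) ^ 2 = 1) :
    (g * J) * (((g * J)ᵀ)⁻¹ * (g * J)) = (g * J)ᵀ := by
  have hMdet : IsUnit (g * J).det := by rw [det_mul]; exact hg.mul hJ
  have hMtdet : IsUnit ((g * J)ᵀ).det := by rwa [det_transpose]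
  have hσM : (g * (J * (g⁻¹)ᵀ * J⁻¹)) * (g * J)ᵀ = ε • (g * J) := by
    rw [transpose_mul]
    calc g * (J * (g⁻¹)ᵀ * J⁻¹) * (Jᵀ * gᵀ)
        = g * J * (gᵀ)⁻¹ * (J⁻¹ * Jᵀ) * gᵀ := by
          rw [transpose_nonsing_inv]; simp only [Matrix.mul_assoc]
      _ = ε • (g * J) := by
          rw [hJt, Matrix.mul_smul, Matrix.nonsing_inv_mul J hJ, Matrix.mul_smul, Matrix.mul_one,
            Matrix.smul_mul, Matrix.mul_assoc,
            Matrix.nonsing_inv_mul _ (by rwa [det_transpose]), Matrix.mul_one]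
  have hσ' : (g * (J * (g⁻¹)ᵀ * J⁻¹)) = ε • ((g * J) * ((g * J)ᵀ)⁻¹) := by
    rw [← Matrix.smul_mul, ← hσM]
    rw [Matrix.mul_assoc (g * (J * (g⁻¹)ᵀ * J⁻¹)), Matrix.mul_nonsing_inv _ hMtdet,
      Matrix.mul_one]

  have hε2' : ε ^ 2 = 1 := by rw [pow_two]; exact hε2
  have hNN : ((g * J) * ((g * J)ᵀ)⁻¹) * ((g * J) * ((g * J)ᵀ)⁻¹) = 1 := by
    have h2 := hinv
    rw [hσ', smul_pow, hε2', one_smul, pow_two] at h2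
    exact h2
  have h3 := congrArg (· * (g * J)ᵀ) hNN
  simp only [Matrix.mul_assoc, Matrix.one_mul] at h3
  rw [Matrix.nonsing_inv_mul _ hMtdet, Matrix.mul_one] at h3
  simp only [Matrix.mul_assoc]
  exact h3
open Matrix Module

theorem keyDecomp {n : ℕ} {K : Type*} [Field K] [CharZero K]
    (M : Matrix (Fin n) (Fin n) K) (hM : IsUnit M.det)
    (hMM : M * ((Mᵀ)⁻¹ * M) = Mᵀ) :
    ∃ z : Matrix (Fin n) (Fin n) K, IsUnit z.det ∧
    ∃ p : ℕ, p ≤ n ∧ Even (n - p) ∧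
      (∀ i j : Fin n, (i : ℕ) < p → (zᵀ * M * z) i j = (zᵀ * M * z) j i) ∧
      (∀ i j : Fin n, p ≤ (i : ℕ) → (zᵀ * M * z) i j = -((zᵀ * M * z) j i)) := by
  have hMt : IsUnit (Mᵀ).det := by rwa [det_transpose]
  set u : Matrix (Fin n) (Fin n) K := (Mᵀ)⁻¹ * M with hu_def
  have hMtu : Mᵀ * u = M := by
    rw [hu_def, ← Matrix.mul_assoc, Matrix.mul_nonsing_inv _ hMt, Matrix.one_mul]
  have huu : u * u = 1 := by
    rw [hu_def, Matrix.mul_assoc, ← hu_def, hMM, Matrix.nonsing_inv_mul _ hMt]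
  -- eigen-type identities
  have hplus : ∀ x : Fin n → K, u *ᵥ x = x → Mᵀ *ᵥ x = M *ᵥ x := by
    intro x hx
    have : M *ᵥ x = Mᵀ *ᵥ (u *ᵥ x) := by rw [Matrix.mulVec_mulVec, hMtu]
    rw [hx] at this; exact this.symm
  have hminus : ∀ x : Fin n → K, u *ᵥ x = -x → Mᵀ *ᵥ x = -(M *ᵥ x) := by
    intro x hx
    have : M *ᵥ x = Mᵀ *ᵥ (u *ᵥ x) := by rw [Matrix.mulVec_mulVec, hMtu]
    rw [hx, Matrix.mulVec_neg] at this
    rw [this, neg_neg]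
  -- submodules
  set Wp : Submodule K (Fin n → K) := LinearMap.ker (Matrix.mulVecLin (u - 1)) with hWp
  set Wm : Submodule K (Fin n → K) := LinearMap.ker (Matrix.mulVecLin (u + 1)) with hWm
  have memWp : ∀ x : Fin n → K, x ∈ Wp ↔ u *ᵥ x = x := by
    intro x
    rw [hWp, LinearMap.mem_ker, Matrix.mulVecLin_apply, Matrix.sub_mulVec, Matrix.one_mulVec,
      sub_eq_zero]
  have memWm : ∀ x : Fin n → K, x ∈ Wm ↔ u *ᵥ x = -x := by
    intro x
    rw [hWm, LinearMap.mem_ker, Matrix.mulVecLin_apply, Matrix.add_mulVec, Matrix.one_mulVec,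
      add_eq_zero_iff_eq_neg]
  have hcompl : IsCompl Wp Wm := by
    constructor
    · rw [disjoint_iff_inf_le]
      intro x hx
      have h1 := (memWp x).mp hx.1
      have h2 := (memWm x).mp hx.2
      have hxx : x = -x := h1.symm.trans h2
      rw [Submodule.mem_bot]
      funext i
      exact CharZero.eq_neg_self_iff.mp (congrFun hxx i)
    · rw [codisjoint_iff_le_sup]
      intro x _
      have h1 : (1/2 : K) • (x + u *ᵥ x) ∈ Wp := by
        rw [memWp, Matrix.mulVec_smul, Matrix.mulVec_add, Matrix.mulVec_mulVec, huu,
          Matrix.one_mulVec, add_comm (u *ᵥ x)]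
      have h2 : (1/2 : K) • (x - u *ᵥ x) ∈ Wm := by
        rw [memWm, Matrix.mulVec_smul, Matrix.mulVec_sub, Matrix.mulVec_mulVec, huu,
          Matrix.one_mulVec, ← smul_neg, neg_sub]
      have hx : x = (1/2 : K) • (x + u *ᵥ x) + (1/2 : K) • (x - u *ᵥ x) := by
        rw [smul_add, smul_sub]
        module
      rw [hx]
      exact Submodule.add_mem_sup h1 h2
  -- dimensions
  have hpq : finrank K Wp + finrank K Wm = n := by
    rw [Submodule.finrank_add_eq_of_isCompl hcompl, Module.finrank_fin_fun]
  set p : ℕ := finrank K Wp with hp_def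
  set q : ℕ := finrank K Wm with hq_def
  -- basis adapted to the decomposition
  set e : (Fin p ⊕ Fin q) ≃ Fin n := finSumFinEquiv.trans (finCongr hpq) with he_def
  set b0 : Basis (Fin p ⊕ Fin q) K (Fin n → K) :=
    ((Module.finBasis K Wp).prod (Module.finBasis K Wm)).map
      (Submodule.prodEquivOfIsCompl _ _ hcompl) with hb0_def
  set b : Basis (Fin n) K (Fin n → K) := b0.reindex e with hb_def
  have hbmem : ∀ i : Fin n, ((i : ℕ) < p ∧ b i ∈ Wp) ∨ (p ≤ (i : ℕ) ∧ b i ∈ Wm) := by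
    intro i
    have hbi : b i = b0 (e.symm i) := by rw [hb_def, Module.Basis.reindex_apply]
    rcases hes : e.symm i with j | j
    · left
      have hie : i = e (Sum.inl j) := by rw [← hes, Equiv.apply_symm_apply]
      have hival : (i : ℕ) = (j : ℕ) := by
        rw [hie, he_def]
        simp [finSumFinEquiv_apply_left]
      constructor
      · rw [hival]; exact j.2
      · rw [hbi, hes, hb0_def]
        simp only [Basis.map_apply, Basis.prod_apply]
        simp [Submodule.coe_prodEquivOfIsCompl']
    · right
      have hie : i = e (Sum.inr j) := by rw [← hes, Equiv.apply_symm_apply]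
      have hival : (i : ℕ) = p + (j : ℕ) := by
        rw [hie, he_def]
        simp [finSumFinEquiv_apply_right]
      constructor
      · omega
      · rw [hbi, hes, hb0_def]
        simp only [Basis.map_apply, Basis.prod_apply]
        simp [Submodule.coe_prodEquivOfIsCompl']
  -- the change of basis matrix
  set z : Matrix (Fin n) (Fin n) K := (Pi.basisFun K (Fin n)).toMatrix b with hz_def
  have hz_apply : ∀ k i : Fin n, z k i = b i k := by
    intro k i
    rw [hz_def, Basis.toMatrix_apply, Pi.basisFun_repr]
  have hz_unit : IsUnit z.det :=
    Matrix.isUnit_det_of_right_inverse (Basis.toMatrix_mul_toMatrix_flip (Pi.basisFun K (Fin n)) b)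
  have hD_apply : ∀ i j : Fin n, (zᵀ * M * z) i j = b i ⬝ᵥ (M *ᵥ b j) := by
    intro i j
    rw [Matrix.mul_assoc, Matrix.mul_apply]
    simp only [Matrix.transpose_apply, hz_apply, Matrix.mul_apply, Matrix.mulVec, dotProduct]
  have L1 : ∀ i j : Fin n, (i : ℕ) < p → (zᵀ * M * z) i j = (zᵀ * M * z) j i := by
    intro i j hi
    have hbi : b i ∈ Wp := by
      rcases hbmem i with ⟨_, h⟩ | ⟨h, _⟩
      · exact h
      · omega
    have hbt : Mᵀ *ᵥ b i = M *ᵥ b i := hplus _ ((memWp _).mp hbi)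
    rw [hD_apply, hD_apply, Matrix.dotProduct_mulVec, ← Matrix.mulVec_transpose, hbt,
      dotProduct_comm]
  have L2 : ∀ i j : Fin n, p ≤ (i : ℕ) → (zᵀ * M * z) i j = -((zᵀ * M * z) j i) := by
    intro i j hi
    have hbi : b i ∈ Wm := by
      rcases hbmem i with ⟨h, _⟩ | ⟨_, h⟩
      · omega
      · exact h
    have hbt : Mᵀ *ᵥ b i = -(M *ᵥ b i) := hminus _ ((memWm _).mp hbi)
    rw [hD_apply, hD_apply, Matrix.dotProduct_mulVec, ← Matrix.mulVec_transpose, hbt,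
      neg_dotProduct, dotProduct_comm]
  -- determinant of D is a unit
  have hD_unit : IsUnit (zᵀ * M * z).det := by
    rw [det_mul, det_mul, det_transpose]
    exact (hz_unit.mul hM).mul hz_unit
  -- evenness via the determinant of the sign matrix
  have hpn : p ≤ n := by omega
  have heven : Even (n - p) := by
    set F : Matrix (Fin n) (Fin n) K :=
      Matrix.diagonal (fun i : Fin n => if (i : ℕ) < p then (1 : K) else -1) with hF_def
    have hDF : (zᵀ * M * z)ᵀ = (zᵀ * M * z) * F := by
      ext i j
      rw [Matrix.transpose_apply, hF_def, Matrix.mul_diagonal]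
      by_cases hj : (j : ℕ) < p
      · rw [if_pos hj, mul_one, L1 j i hj]
      · rw [if_neg hj, mul_neg_one, L2 j i (by omega)]
    have hdet : (zᵀ * M * z).det = (zᵀ * M * z).det * F.det := by
      conv_lhs => rw [← det_transpose, hDF, det_mul]
    have hFdet : F.det = 1 := by
      have hne : (zᵀ * M * z).det ≠ 0 := hD_unit.ne_zero
      exact (mul_right_eq_self₀.mp hdet.symm).resolve_right hne
    have hFdet' : F.det = (-1 : K) ^ (n - p) := by
      rw [hF_def, det_diagonal, Finset.prod_ite _ _]
      rw [Finset.prod_const_one, Finset.prod_const, one_mul]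
      congr 1
      -- card of filter
      have hmap : Finset.univ.filter (fun i : Fin n => (i : ℕ) < p)
          = (Finset.univ : Finset (Fin p)).map ⟨Fin.castLE hpn, Fin.castLE_injective hpn⟩ := by
        ext i
        simp only [Finset.mem_filter, Finset.mem_univ, true_and, Finset.mem_map,
          Function.Embedding.coeFn_mk]
        constructor
        · intro hi; exact ⟨⟨i, hi⟩, rfl⟩
        · rintro ⟨j, rfl⟩; simp
      have h2 := Finset.card_filter_add_card_filter_not
        (s := (Finset.univ : Finset (Fin n))) (p := fun i : Fin n => (i : ℕ) < p)
      rw [hmap, Finset.card_map, Finset.card_univ, Fintype.card_fin] at h2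
      simp only [Finset.card_univ, Fintype.card_fin] at h2
      omega
    rw [hFdet'] at hFdet
    rw [← Nat.not_odd_iff_even]
    intro hodd
    rw [hodd.neg_one_pow] at hFdet
    have : (2 : K) = 0 := by linear_combination -hFdet
    exact two_ne_zero this
  exact ⟨z, hz_unit, p, hpn, heven, L1, L2⟩

theorem stmt_18 {n : ℕ} {K : Type*} [Field K] [CharZero K] (hn : 2 ≤ n)
    (J : Matrix (Fin n) (Fin n) K) (hJ : IsUnit J.det)
    (hJt : Jᵀ = ((-1 : K) ^ (n - 1)) • J)
    (g : Matrix (Fin n) (Fin n) K) (hg : IsUnit g.det)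
    (hinv : (g * (J * (g⁻¹)ᵀ * J⁻¹)) ^ 2 = 1) :
    ∃ y : Matrix (Fin n) (Fin n) K, IsUnit y.det ∧
    ∃ p : ℕ, p ≤ n ∧ Even (n - p) ∧
    ∃ D : Matrix (Fin n) (Fin n) K,
      D = y⁻¹ * g * (J * (y⁻¹)ᵀ * J⁻¹) * J ∧
      IsUnit D.det ∧
      (∀ i j : Fin n,
        (((i : ℕ) < p ∧ p ≤ (j : ℕ)) ∨ ((j : ℕ) < p ∧ p ≤ (i : ℕ))) → D i j = 0) ∧
      (∀ i j : Fin n, (i : ℕ) < p → (j : ℕ) < p → D j i = D i j) ∧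
      (∀ i j : Fin n, p ≤ (i : ℕ) → p ≤ (j : ℕ) → D j i = -D i j) := by
  have hε2 : ((-1 : K) ^ (n - 1)) * ((-1 : K) ^ (n - 1)) = 1 := by
    rw [← pow_add, ← two_mul, pow_mul]
    norm_num
  have hMM := keyMN J hJ hε2 hJt g hg hinv
  have hMdet : IsUnit (g * J).det := by rw [det_mul]; exact hg.mul hJ
  obtain ⟨z, hz, p, hpn, heven, L1, L2⟩ := keyDecomp (g * J) hMdet hMM
  have hzt : IsUnit (zᵀ).det := by rwa [det_transpose]
  refine ⟨(zᵀ)⁻¹, Matrix.isUnit_det_of_right_inverse (Matrix.nonsing_inv_mul _ hzt), p, hpn,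
    heven, zᵀ * (g * J) * z, ?_, ?_, ?_, ?_, ?_⟩
  · rw [Matrix.nonsing_inv_nonsing_inv _ hzt, transpose_transpose]
    simp only [Matrix.mul_assoc]
    rw [Matrix.nonsing_inv_mul J hJ, Matrix.mul_one]
  · rw [det_mul, det_mul, det_transpose]
    exact (hz.mul hMdet).mul hz
  · rintro i j (⟨hi, hj⟩ | ⟨hj, hi⟩)
    · have h1 := L1 i j hi
      have h2 := L2 j i hj
      rw [h2] at h1
      exact CharZero.eq_neg_self_iff.mp h1
    · have h1 := L2 i j hi
      have h2 := L1 j i hj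
      rw [h2] at h1
      exact CharZero.eq_neg_self_iff.mp h1
  · intro i j hi hj
    exact L1 j i hj
  · intro i j hi hj
    exact L2 j i hj
end
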